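/- Let a : [0,∞) → ℝ be bounded and continuous. Then λ ∈ ℝ satisfies: there exist C ≥ 0, α > 0 with ∫_t^s [a(r)−λ] dr ≥ α(s−t) − C for all 0 ≤ t ≤ s, if and only if λ < β⁻(a), where β⁻(a) = liminf_{L,s→+∞} (1/L)∫_s^{s+L} a(r) dr. -/
import Mathlib

open Filter MeasureTheory

/-- Null-projector dichotomy of the shifted equation `x' = [a(t) - λ]x` on `[0,∞)` is
equivalent to `λ < β⁻(a)`, the lower Bohl exponent. -/
theorem stmt_7 (a : ℝ → ℝ) (ha : Continuous a) (hab : ∃ M, ∀ t, |a t| ≤ M) (lam : ℝ) :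
    (∃ C ≥ (0:ℝ), ∃ α > (0:ℝ), ∀ t s : ℝ, 0 ≤ t → t ≤ s →
      (∫ r in t..s, a r - lam) ≥ α * (s - t) - C) ↔
    lam < Filter.liminf (fun p : ℝ × ℝ => (1 / p.1) * ∫ r in p.2..(p.2 + p.1), a r)
      (Filter.atTop ×ˢ Filter.atTop) := by
  obtain ⟨M, hM⟩ := hab
  have hM0 : 0 ≤ M := le_trans (abs_nonneg _) (hM 0)
  have hint : ∀ t s : ℝ, IntervalIntegrable a volume t s :=
    fun t s => ha.intervalIntegrable t s
  have hsub : ∀ t s : ℝ, (∫ r in t..s, a r - lam)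
      = (∫ r in t..s, a r) - lam * (s - t) := by
    intro t s
    rw [intervalIntegral.integral_sub (hint t s) intervalIntegrable_const]
    simp [mul_comm]
  have habs : ∀ t s : ℝ, t ≤ s → |∫ r in t..s, a r| ≤ M * (s - t) := by
    intro t s hts
    have h := intervalIntegral.norm_integral_le_of_norm_le_const
      (C := M) (f := a) (a := t) (b := s)
      (fun x _ => by simpa using hM x)
    rw [Real.norm_eq_abs, abs_of_nonneg (sub_nonneg.mpr hts)] at h
    exact h
  have hlow : ∀ t s : ℝ, t ≤ s →
      (∫ r in t..s, a r - lam) ≥ -((M + |lam|) * (s - t)) := by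
    intro t s hts
    have h := intervalIntegral.norm_integral_le_of_norm_le_const
      (C := M + |lam|) (f := fun r => a r - lam) (a := t) (b := s)
      (fun x _ => by
        have := hM x
        simpa [Real.norm_eq_abs] using (abs_sub (a x) lam).trans (by linarith))
    rw [Real.norm_eq_abs, abs_of_nonneg (sub_nonneg.mpr hts)] at h
    have h' : |∫ r in t..s, a r - lam| ≤ (M + |lam|) * (s - t) := h
    have := neg_abs_le (∫ r in t..s, a r - lam)
    linarith
  set u : ℝ × ℝ → ℝ := fun p => (1 / p.1) * ∫ r in p.2..(p.2 + p.1), a r with hu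
  have hbdd_above : ∀ᶠ p in atTop ×ˢ atTop, u p ≤ M := by
    rw [prod_atTop_atTop_eq]
    filter_upwards [eventually_ge_atTop ((1 : ℝ), (0 : ℝ))] with p hp
    obtain ⟨hp1, _⟩ : (1:ℝ) ≤ p.1 ∧ (0:ℝ) ≤ p.2 := hp
    have hL : (0:ℝ) < p.1 := by linarith
    have h1 := habs p.2 (p.2 + p.1) (by linarith)
    have h2 := le_abs_self (∫ r in p.2..(p.2 + p.1), a r)
    have : (∫ r in p.2..(p.2 + p.1), a r) ≤ M * p.1 := by
      calc (∫ r in p.2..(p.2 + p.1), a r) ≤ |∫ r in p.2..(p.2 + p.1), a r| := h2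
        _ ≤ M * (p.2 + p.1 - p.2) := h1
        _ = M * p.1 := by ring_nf
    rw [hu]
    simp only [one_div]
    rw [inv_mul_eq_div, div_le_iff₀ hL]
    linarith
  have hbdd_below : ∀ᶠ p in atTop ×ˢ atTop, -M ≤ u p := by
    rw [prod_atTop_atTop_eq]
    filter_upwards [eventually_ge_atTop ((1 : ℝ), (0 : ℝ))] with p hp
    obtain ⟨hp1, _⟩ : (1:ℝ) ≤ p.1 ∧ (0:ℝ) ≤ p.2 := hp
    have hL : (0:ℝ) < p.1 := by linarith
    have h1 := habs p.2 (p.2 + p.1) (by linarith)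
    have h2 := neg_abs_le (∫ r in p.2..(p.2 + p.1), a r)
    have : -(M * p.1) ≤ (∫ r in p.2..(p.2 + p.1), a r) := by
      have : |∫ r in p.2..(p.2 + p.1), a r| ≤ M * p.1 := by
        calc |∫ r in p.2..(p.2 + p.1), a r| ≤ M * (p.2 + p.1 - p.2) := h1
          _ = M * p.1 := by ring_nf
      linarith
    rw [hu]
    simp only [one_div]
    rw [inv_mul_eq_div, le_div_iff₀ hL]
    linarith
  constructor
  · rintro ⟨C, hC, α, hα, h⟩
    have hco : (atTop ×ˢ atTop : Filter (ℝ × ℝ)).IsCoboundedUnder (· ≥ ·) u :=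
      IsBoundedUnder.isCoboundedUnder_ge ⟨M, hbdd_above⟩
    have hev : ∀ᶠ p in atTop ×ˢ atTop, lam + α / 2 ≤ u p := by
      rw [prod_atTop_atTop_eq]
      filter_upwards [eventually_ge_atTop ((max 1 (2 * C / α) : ℝ), (0 : ℝ))] with p hp
      obtain ⟨hp1, hp2⟩ : (max 1 (2 * C / α) : ℝ) ≤ p.1 ∧ (0:ℝ) ≤ p.2 := hp
      have hL1 : (1:ℝ) ≤ p.1 := le_trans (le_max_left _ _) hp1
      have hL : (0:ℝ) < p.1 := by linarith
      have hCL : C ≤ α * p.1 / 2 := by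
        have h2 : 2 * C / α ≤ p.1 := le_trans (le_max_right _ _) hp1
        rw [div_le_iff₀ hα] at h2
        linarith
      have hmain := h p.2 (p.2 + p.1) hp2 (by linarith)
      rw [hsub] at hmain
      have : (lam + α / 2) * p.1 ≤ ∫ r in p.2..(p.2 + p.1), a r := by nlinarith
      rw [hu]
      simp only [one_div]
      rw [inv_mul_eq_div, le_div_iff₀ hL]
      linarith
    have := le_liminf_of_le hco hev
    calc lam < lam + α / 2 := by linarith
      _ ≤ _ := this
  · intro hlt
    set β := liminf u (atTop ×ˢ atTop) with hβ
    set α := (β - lam) / 2 with hαdef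
    have hα : 0 < α := by simp only [hαdef]; linarith
    have hev : ∀ᶠ p in atTop ×ˢ atTop, lam + α < u p := by
      apply eventually_lt_of_lt_liminf
      · rw [← hβ]; simp only [hαdef]; linarith
      · exact ⟨-M, hbdd_below⟩
    rw [prod_atTop_atTop_eq, eventually_atTop] at hev
    obtain ⟨p₀, hp₀⟩ := hev
    set L₀ := max p₀.1 1 with hL₀def
    set s₀ := max p₀.2 0 with hs₀def
    have hL₀1 : (1:ℝ) ≤ L₀ := le_max_right _ _
    have hs₀0 : (0:ℝ) ≤ s₀ := le_max_right _ _
    -- key estimate: for s₀ ≤ t and t + L₀ ≤ s, ∫_t^s (a - lam) ≥ α (s - t)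
    have key : ∀ t s : ℝ, s₀ ≤ t → t + L₀ ≤ s →
        (∫ r in t..s, a r - lam) ≥ α * (s - t) := by
      intro t s hts hL
      have hLpos : (0:ℝ) < s - t := by linarith
      have hge : (s - t, t) ≥ p₀ :=
        ⟨by simp only; linarith [le_max_left p₀.1 1],
         by simp only; linarith [le_max_left p₀.2 0]⟩
      have := hp₀ (s - t, t) hge
      rw [hu] at this
      simp only [one_div] at this
      rw [inv_mul_eq_div, lt_div_iff₀ hLpos] at this
      have hseq : t + (s - t) = s := by ring
      rw [hseq] at this
      rw [hsub]
      nlinarith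
    refine ⟨(α + M + |lam|) * (L₀ + s₀), ?_, α, hα, ?_⟩
    · apply mul_nonneg
      · positivity
      · linarith
    intro t s ht hts
    set C := (α + M + |lam|) * (L₀ + s₀) with hCdef
    by_cases hcase : s - t ≤ L₀ + s₀
    · have h1 := hlow t s hts
      have h2 : (α + M + |lam|) * (s - t) ≤ C := by
        rw [hCdef]
        apply mul_le_mul_of_nonneg_left hcase (by positivity)
      nlinarith [abs_nonneg lam]
    · push_neg at hcase
      set t' := max t s₀ with ht'def
      have ht'1 : t ≤ t' := le_max_left _ _
      have ht'2 : s₀ ≤ t' := le_max_right _ _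
      have ht'3 : t' ≤ t + s₀ := max_le (by linarith) (by linarith)
      have ht's : t' + L₀ ≤ s := by linarith
      have hsplit : (∫ r in t..t', a r - lam) + (∫ r in t'..s, a r - lam)
          = ∫ r in t..s, a r - lam :=
        intervalIntegral.integral_add_adjacent_intervals
          ((hint t t').sub intervalIntegrable_const)
          ((hint t' s).sub intervalIntegrable_const)
      have h1 := hlow t t' ht'1
      have h2 := key t' s ht'2 ht's
      have h3 : (α + M + |lam|) * (t' - t) ≤ C := by
        rw [hCdef]
        apply mul_le_mul_of_nonneg_left (by linarith) (by positivity)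
      nlinarith [abs_nonneg lam]
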